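/- Let g(z) = λ z² e^{−(bz − c/z)} with |λ| = 1 and b, c ∈ ℂ*. If g is symmetric with respect to the unit circle (g(1/conj(z)) = 1/conj(g(z)) for all z ∈ ℂ*), then c = conj(b) and λ has the form e^{2πia} with a ∈ ℝ. -/

import Mathlib

open Complex

/-- If `g(z) = λ z² e^{−(bz − c/z)}` with `|λ| = 1`, `b, c ≠ 0`, is symmetric with
respect to the unit circle, then `c = conj b` and `λ = e^{2πia}` for some `a ∈ ℝ`. -/
theorem stmt_10 (l b c : ℂ) (hl : ‖l‖ = 1) (hb : b ≠ 0) (hc : c ≠ 0)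
    (g : ℂ → ℂ)
    (hg : ∀ z : ℂ, z ≠ 0 → g z = l * z ^ 2 * Complex.exp (-(b * z - c / z)))
    (hsym : ∀ z : ℂ, z ≠ 0 → g (1 / (starRingEnd ℂ) z) = 1 / (starRingEnd ℂ) (g z)) :
    c = (starRingEnd ℂ) b ∧ ∃ a : ℝ, l = Complex.exp (2 * Real.pi * Complex.I * a) := by
  -- real-part equation from z = 2
  have h1 := hsym 2 two_ne_zero
  rw [hg 2 two_ne_zero, show (starRingEnd ℂ) 2 = 2 from map_ofNat _ 2] at h1
  rw [hg (1/2) (by norm_num)] at h1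
  have h2 := congrArg (‖·‖) h1
  simp [map_mul, map_div₀, Complex.norm_exp, hl, Complex.norm_conj] at h2
  have hre : c.re = b.re := by
    have h3 : Real.exp (c.re * 2 - b.re * 2⁻¹) = Real.exp (-(c.re / 2 - b.re * 2)) := by
      rw [Real.exp_neg]
      have h4 : (0:ℝ) < (2:ℝ)^2 := by norm_num
      field_simp at h2 ⊢
      linarith
    have := Real.exp_injective h3
    linarith
  -- imaginary-part equation from z = I/2
  have hI : (Complex.I / 2 : ℂ) ≠ 0 := by simp [Complex.I_ne_zero]
  have h5 := hsym (Complex.I/2) hI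
  rw [show (1:ℂ) / (starRingEnd ℂ) (Complex.I/2) = 2 * Complex.I by
        rw [map_div₀, Complex.conj_I, map_ofNat, one_div, inv_div, div_neg, Complex.div_I]; ring] at h5
  rw [hg (2*Complex.I) (by simp [Complex.I_ne_zero]), hg (Complex.I/2) hI] at h5
  have h6 := congrArg (‖·‖) h5
  simp [map_mul, map_div₀, Complex.norm_exp, hl, Complex.norm_conj, Complex.div_re, Complex.normSq_apply] at h6
  have him : c.im = -b.im := by
    have h7 : Real.exp (c.im * 2 / (2 * 2) + b.im * 2)
        = Real.exp (-(c.im * 2⁻¹ / (2⁻¹ * 2⁻¹) + b.im * 2⁻¹)) := by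
      rw [Real.exp_neg]
      field_simp at h6 ⊢
      linarith
    have h8 := Real.exp_injective h7
    norm_num at h8
    linarith
  refine ⟨Complex.ext (by simpa using hre) (by simpa using him), l.arg / (2 * Real.pi), ?_⟩
  have h9 := Complex.norm_mul_exp_arg_mul_I l
  rw [hl] at h9; norm_num at h9
  have hpi : (Real.pi : ℂ) ≠ 0 := by exact_mod_cast Real.pi_ne_zero
  have h10 : (2 * (Real.pi : ℂ) * Complex.I * ((l.arg / (2 * Real.pi) : ℝ) : ℂ))
      = (l.arg : ℂ) * Complex.I := by
    push_cast
    field_simp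
  rw [h10, h9]
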